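/- arXiv:1708.03378 — 2 statements merged into one kernel-verified Lean document; each statement's English description precedes it below -/
import Mathlib

section
/- Let w : ℂ → ℂ be an entire function with an essential singularity at infinity (i.e., w is not a polynomial). Then the set of points w₀ ∈ ℂ such that the fiber {z ∈ ℂ : w(z) = w₀} is infinite is dense in ℂ. -/
open Set Metric Filter Function Polynomial

/-- An entire function with polynomial growth of degree `n` is a polynomial. -/
lemma entire_poly_growth : ∀ (n : ℕ) (f : ℂ → ℂ), Differentiable ℂ f →
    (∃ C R : ℝ, ∀ z : ℂ, R ≤ ‖z‖ → ‖f z‖ ≤ C * ‖z‖ ^ n) →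
    ∃ P : Polynomial ℂ, f = fun z => P.eval z := by
  intro n
  induction n with
  | zero =>
    rintro f hf ⟨C, R, hCR⟩
    obtain ⟨C₂, hC₂⟩ : ∃ C₂, ∀ z ∈ closedBall (0:ℂ) R, ‖f z‖ ≤ C₂ :=
      (isCompact_closedBall (0:ℂ) R).exists_bound_of_continuousOn hf.continuous.continuousOn
    have hb : Bornology.IsBounded (range f) := by
      rw [isBounded_iff_forall_norm_le]
      refine ⟨max C C₂, ?_⟩
      rintro x ⟨z, rfl⟩
      rcases le_or_gt R ‖z‖ with h | h
      · simpa using (hCR z h).trans (le_max_left _ _)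
      · exact (hC₂ z (by simpa [Complex.dist_eq] using h.le)).trans (le_max_right _ _)
    obtain ⟨c, hc⟩ := hf.exists_eq_const_of_bounded hb
    exact ⟨Polynomial.C c, by funext z; rw [hc]; simp⟩
  | succ n ih =>
    rintro f hf ⟨C, R, hCR⟩
    have hg : Differentiable ℂ (dslope f 0) := by
      rw [← differentiableOn_univ] at hf ⊢
      exact (Complex.differentiableOn_dslope univ_mem).mpr hf
    have hgrow : ∃ C' R' : ℝ, ∀ z : ℂ, R' ≤ ‖z‖ → ‖dslope f 0 z‖ ≤ C' * ‖z‖ ^ n := by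
      refine ⟨max C 0 + ‖f 0‖, max R 1, fun z hz => ?_⟩
      have hz1 : (1:ℝ) ≤ ‖z‖ := le_trans (le_max_right _ _) hz
      have hzR : R ≤ ‖z‖ := le_trans (le_max_left _ _) hz
      have hz0 : z ≠ 0 := by
        intro h; rw [h] at hz1; simp at hz1; linarith
      rw [dslope_of_ne f hz0, slope_def_field, sub_zero, div_eq_inv_mul]
      have h1 : ‖(z)⁻¹ * (f z - f 0)‖ = ‖f z - f 0‖ / ‖z‖ := by
        rw [norm_mul, norm_inv]; ring
      rw [h1]
      have hzpos : (0:ℝ) < ‖z‖ := lt_of_lt_of_le one_pos hz1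
      rw [div_le_iff₀ hzpos]
      have hpow : (1:ℝ) ≤ ‖z‖ ^ (n+1) := one_le_pow₀ hz1
      calc ‖f z - f 0‖ ≤ C * ‖z‖ ^ (n+1) + ‖f 0‖ :=
            (norm_sub_le _ _).trans (by gcongr; exact hCR z hzR)
        _ ≤ max C 0 * ‖z‖ ^ (n+1) + ‖f 0‖ * ‖z‖ ^ (n+1) := by
            have h3 : C * ‖z‖ ^ (n+1) ≤ max C 0 * ‖z‖ ^ (n+1) := by
              gcongr; exact le_max_left _ _
            nlinarith [norm_nonneg (f 0)]
        _ = (max C 0 + ‖f 0‖) * ‖z‖ ^ n * ‖z‖ := by ring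
    obtain ⟨P, hP⟩ := ih (dslope f 0) hg hgrow
    refine ⟨Polynomial.C (f 0) + Polynomial.X * P, ?_⟩
    funext z
    have hds := sub_smul_dslope f 0 z
    rw [sub_zero, smul_eq_mul] at hds
    have hPz : dslope f 0 z = P.eval z := by rw [hP]
    simp only [eval_add, eval_C, eval_mul, eval_X]
    rw [← hPz]
    linear_combination -hds

lemma entire_nonconst_isOpenMap {w : ℂ → ℂ} (hw : Differentiable ℂ w)
    (hnc : ∀ c : ℂ, w ≠ fun _ => c) : IsOpenMap w := by
  rw [isOpenMap_iff_nhds_le]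
  intro z
  rcases (hw.analyticAt z).eventually_constant_or_nhds_le_map_nhds with h | h
  · exfalso
    have hEq := AnalyticOnNhd.eqOn_of_preconnected_of_eventuallyEq
      (fun x _ => hw.analyticAt x) (fun x _ => analyticAt_const (v := w z))
      isPreconnected_univ (mem_univ z) (h : w =ᶠ[nhds z] fun _ => w z)
    exact hnc (w z) (funext fun x => hEq (mem_univ x))
  · exact h

/-- Casorati–Weierstrass at infinity. -/
lemma CW {w : ℂ → ℂ} (hw : Differentiable ℂ w)
    (hnp : ¬ ∃ P : Polynomial ℂ, w = fun z => P.eval z) (m : ℝ) :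
    Dense (w '' {z : ℂ | m < ‖z‖}) := by
  by_contra hd
  rw [Metric.dense_iff] at hd
  push_neg at hd
  obtain ⟨a, ε, hε, hsep⟩ := hd
  rw [eq_empty_iff_forall_notMem] at hsep
  have hsep' : ∀ z : ℂ, m < ‖z‖ → ε ≤ ‖w z - a‖ := by
    intro z hz
    by_contra hlt
    push_neg at hlt
    exact hsep (w z) ⟨by simpa [Metric.mem_ball, Complex.dist_eq] using hlt, ⟨z, hz, rfl⟩⟩
  set M : ℝ := max m 1 with hM
  have hMpos : (0:ℝ) < M := lt_of_lt_of_le one_pos (le_max_right _ _)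
  set r : ℝ := M⁻¹ with hr
  have hrpos : (0:ℝ) < r := by positivity
  have hout : ∀ ζ : ℂ, ζ ∈ ball (0:ℂ) r → ζ ≠ 0 → m < ‖ζ⁻¹‖ := by
    intro ζ hζb hζ0
    simp only [mem_ball, Complex.dist_eq, sub_zero] at hζb
    have hζpos : (0:ℝ) < ‖ζ‖ := norm_pos_iff.mpr hζ0
    rw [norm_inv]
    have hlt : M < ‖ζ‖⁻¹ := by
      rw [lt_inv_comm₀ hMpos hζpos]
      simpa [hr] using hζb
    exact lt_of_le_of_lt (le_max_left m 1) hlt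
  set g : ℂ → ℂ := fun ζ => (w ζ⁻¹ - a)⁻¹ with hgdef
  have hwne : ∀ ζ : ℂ, ζ ∈ ball (0:ℂ) r → ζ ≠ 0 → w ζ⁻¹ - a ≠ 0 := by
    intro ζ hζb hζ0 h
    have := hsep' ζ⁻¹ (hout ζ hζb hζ0)
    rw [h] at this; simp at this; linarith
  have hgd : DifferentiableOn ℂ g (ball (0:ℂ) r \ {0}) := by
    rintro ζ ⟨hζb, hζ0'⟩
    have hζ0 : ζ ≠ 0 := hζ0'
    apply DifferentiableAt.differentiableWithinAt
    exact ((hw.differentiableAt.comp ζ (differentiableAt_inv hζ0)).sub_const a).inv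
      (hwne ζ hζb hζ0)
  have hgb : BddAbove (norm ∘ g '' (ball (0:ℂ) r \ {0})) := by
    refine ⟨ε⁻¹, ?_⟩
    rintro x ⟨ζ, ⟨hζb, hζ0⟩, rfl⟩
    simp only [comp_apply, hgdef, norm_inv]
    exact inv_anti₀ hε (hsep' ζ⁻¹ (hout ζ hζb hζ0))
  have hball : ball (0:ℂ) r ∈ nhds (0:ℂ) := ball_mem_nhds 0 hrpos
  have hh : DifferentiableOn ℂ (update g 0 (limUnder (nhdsWithin 0 {(0:ℂ)}ᶜ) g)) (ball (0:ℂ) r) :=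
    Complex.differentiableOn_update_limUnder_of_bddAbove hball hgd hgb
  set h : ℂ → ℂ := update g 0 (limUnder (nhdsWithin 0 {(0:ℂ)}ᶜ) g) with hhdef
  have hha : AnalyticAt ℂ h 0 := hh.analyticAt hball
  have hgne : ∀ ζ : ℂ, ζ ∈ ball (0:ℂ) r → ζ ≠ 0 → h ζ ≠ 0 := by
    intro ζ hζb hζ0
    rw [hhdef, update_of_ne hζ0]
    exact inv_ne_zero (hwne ζ hζb hζ0)
  have hne : analyticOrderAt h 0 ≠ ⊤ := by
    intro htop
    have hev := (analyticOrderAt_eq_top).mp htop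
    obtain ⟨ρ, hρpos, hρ⟩ := Metric.eventually_nhds_iff_ball.mp hev
    set ζ : ℂ := ((min ρ r / 2 : ℝ) : ℂ) with hζdef
    have hpos : (0:ℝ) < min ρ r / 2 := by positivity
    have hζnorm : ‖ζ‖ = min ρ r / 2 := by
      rw [hζdef, Complex.norm_real, Real.norm_of_nonneg hpos.le]
    have hζ0 : ζ ≠ 0 := by
      intro hc; rw [hc, norm_zero] at hζnorm; linarith
    have hζρ : ζ ∈ ball (0:ℂ) ρ := by
      rw [mem_ball_zero_iff, hζnorm]
      have : min ρ r ≤ ρ := min_le_left _ _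
      linarith
    have hζr : ζ ∈ ball (0:ℂ) r := by
      rw [mem_ball_zero_iff, hζnorm]
      have : min ρ r ≤ r := min_le_right _ _
      linarith
    exact hgne ζ hζr hζ0 (hρ ζ hζρ)
  obtain ⟨n, hn⟩ : ∃ n : ℕ, analyticOrderAt h 0 = n := by
    cases' ho : analyticOrderAt h 0 with n
    · exact absurd ho hne
    · exact ⟨_, rfl⟩
  obtain ⟨u, hu, hu0, huev⟩ := (hha.analyticOrderAt_eq_natCast (n := n)).mp hn
  -- continuity bound on u near 0
  have hucont : ContinuousAt u 0 := hu.continuousAt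
  have hub : ∀ᶠ ζ in nhds (0:ℂ), ‖u 0‖ / 2 ≤ ‖u ζ‖ := by
    have : ∀ᶠ ζ in nhds (0:ℂ), ‖u ζ‖ ∈ Ioi (‖u 0‖ / 2) := by
      apply (continuous_norm.continuousAt.comp hucont).eventually_mem
      exact Ioi_mem_nhds (by simpa using half_lt_self (norm_pos_iff.mpr hu0))
    filter_upwards [this] with ζ hζ using le_of_lt hζ
  obtain ⟨δ, hδpos, hδ⟩ := Metric.eventually_nhds_iff_ball.mp
    ((huev.and hub).and (eventually_mem_nhds_iff.mpr hball))
  -- now derive polynomial growth for w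
  have hgrow : ∃ C R : ℝ, ∀ z : ℂ, R ≤ ‖z‖ → ‖w z‖ ≤ C * ‖z‖ ^ n := by
    refine ⟨‖a‖ + 2 / ‖u 0‖, max δ⁻¹ 1 + 1, fun z hz => ?_⟩
    have hz1 : (1:ℝ) < ‖z‖ := by
      have : (1:ℝ) ≤ max δ⁻¹ 1 := le_max_right _ _
      linarith
    have hz0 : z ≠ 0 := by
      intro hzz; rw [hzz] at hz1; simp at hz1; linarith
    have hzinv : ‖z⁻¹‖ < δ := by
      rw [norm_inv, inv_lt_comm₀ (by linarith) hδpos]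
      have : δ⁻¹ ≤ max δ⁻¹ 1 := le_max_left _ _
      linarith
    have hzb : z⁻¹ ∈ ball (0:ℂ) δ := mem_ball_zero_iff.mpr hzinv
    obtain ⟨⟨heq, hnormu⟩, hmem⟩ := hδ z⁻¹ hzb
    have hz0' : z⁻¹ ≠ 0 := inv_ne_zero hz0
    have hmem' : z⁻¹ ∈ ball (0:ℂ) r := mem_of_mem_nhds hmem
    -- h z⁻¹ = (w z - a)⁻¹
    have hval : h z⁻¹ = (w z - a)⁻¹ := by
      rw [hhdef, update_of_ne hz0', hgdef]
      simp [inv_inv]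
    have hwa : w z - a ≠ 0 := by
      have := hwne z⁻¹ hmem' hz0'
      rwa [inv_inv] at this
    have hhz : h z⁻¹ = (z⁻¹) ^ n * u z⁻¹ := by simpa using heq
    have hu0' : (0:ℝ) < ‖u 0‖ := norm_pos_iff.mpr hu0
    have huz : u z⁻¹ ≠ 0 := by
      intro hc; rw [hc, norm_zero] at hnormu; linarith
    -- ‖w z - a‖ = ‖z‖^n / ‖u z⁻¹‖
    have hnorm : ‖w z - a‖ = ‖z‖ ^ n / ‖u z⁻¹‖ := by
      have : w z - a = ((z⁻¹) ^ n * u z⁻¹)⁻¹ := by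
        rw [← hhz, hval, inv_inv]
      rw [this, norm_inv, norm_mul, norm_pow, norm_inv]
      rw [mul_inv, inv_pow, inv_inv, div_eq_mul_inv]
    have hbound : ‖w z - a‖ ≤ 2 / ‖u 0‖ * ‖z‖ ^ n := by
      rw [hnorm, div_le_iff₀ (norm_pos_iff.mpr huz)]
      have h2 : ‖u 0‖ / 2 ≤ ‖u z⁻¹‖ := hnormu
      have h3 : (1:ℝ) ≤ 2 / ‖u 0‖ * ‖u z⁻¹‖ := by
        rw [div_mul_eq_mul_div, le_div_iff₀ hu0']; linarith
      nlinarith [pow_nonneg (norm_nonneg z) n]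
    calc ‖w z‖ ≤ ‖a‖ + ‖w z - a‖ := by
          have := norm_add_le a (w z - a); simpa using this
      _ ≤ ‖a‖ + 2 / ‖u 0‖ * ‖z‖ ^ n := by linarith
      _ ≤ ‖a‖ * ‖z‖ ^ n + 2 / ‖u 0‖ * ‖z‖ ^ n := by
          have : (1:ℝ) ≤ ‖z‖ ^ n := one_le_pow₀ hz1.le
          nlinarith [norm_nonneg a]
      _ = (‖a‖ + 2 / ‖u 0‖) * ‖z‖ ^ n := by ring
  exact hnp (entire_poly_growth n w hw hgrow)

/-- If `w` is entire and transcendental (not a polynomial), then the set of values `w₀`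
whose fiber `{z | w z = w₀}` is infinite is dense in `ℂ`. -/
theorem stmt1 (w : ℂ → ℂ) (hw : Differentiable ℂ w)
    (hnp : ¬ ∃ P : Polynomial ℂ, w = fun z => P.eval z) :
    Dense {w₀ : ℂ | {z : ℂ | w z = w₀}.Infinite} := by
  have hnc : ∀ c : ℂ, w ≠ fun _ => c := by
    intro c hc
    exact hnp ⟨Polynomial.C c, by rw [hc]; funext z; simp⟩
  have hopen : IsOpenMap w := entire_nonconst_isOpenMap hw hnc
  have hV : Dense (⋂ m : ℕ, w '' {z : ℂ | (m:ℝ) < ‖z‖}) := by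
    apply dense_iInter_of_isOpen
    · intro m
      exact hopen _ (isOpen_lt continuous_const continuous_norm)
    · intro m
      exact CW hw hnp m
  refine hV.mono ?_
  intro w₀ hw₀
  simp only [mem_iInter] at hw₀
  simp only [mem_setOf_eq]
  intro hfin
  obtain ⟨C, hC⟩ := isBounded_iff_forall_norm_le.mp hfin.isBounded
  obtain ⟨m, hm⟩ := exists_nat_ge C
  obtain ⟨z, hz, hzw⟩ := hw₀ m
  have : ‖z‖ ≤ C := hC z hzw
  simp only [mem_setOf_eq] at hz
  linarith
end

section
/- For w in the open strip Ω = {-T < Im z < T}, the function g_w(z) = Σ_{n∈ℤ} (conj(e^{inw}) / cosh(2nT)) e^{inz} belongs to H² (its coefficients a_n = conj(e^{inw})/cosh(2nT) satisfy Σ |a_n|² cosh(2nT) < ∞), and for every f ∈ H² one has ⟨f, g_w⟩_H = f(w). That is, g_w is the reproducing kernel of H² at w. -/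
open Complex Real

/-- The reproducing kernel of the periodic Hardy space: for `w` in the strip, the
coefficients `a_n = conj(e^{inw})/cosh(2nT)` define an element `g_w` of `H²`, and
`⟨f, g_w⟩_H = Σ c_n conj(a_n) cosh(2nT) = f(w)` for every `f ∈ H²`. -/
theorem stmt7 (T : ℝ) (hT : 0 < T) (w : ℂ) (hw : |w.im| < T)
    (a : ℤ → ℂ)
    (ha : ∀ n : ℤ, a n = starRingEnd ℂ (Complex.exp (Complex.I * n * w)) /
      Real.cosh (2 * n * T)) :
    (Summable fun n : ℤ => ‖a n‖ ^ 2 * Real.cosh (2 * n * T)) ∧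
    (∀ c : ℤ → ℂ, Summable (fun n : ℤ => ‖c n‖ ^ 2 * Real.cosh (2 * n * T)) →
      (∑' n : ℤ, c n * starRingEnd ℂ (a n) * Real.cosh (2 * n * T)) =
        ∑' n : ℤ, c n * Complex.exp (Complex.I * n * w)) := by
  have hcoshpos : ∀ n : ℤ, (0:ℝ) < Real.cosh (2 * n * T) := fun n => Real.cosh_pos _
  constructor
  · -- summability
    set r : ℝ := Real.exp (-(2 * (T - |w.im|))) with hr
    have hr0 : 0 ≤ r := (Real.exp_pos _).le
    have hr1 : r < 1 := by
      rw [hr, Real.exp_lt_one_iff]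
      nlinarith
    have hsum : Summable (fun n : ℤ => 2 * r ^ n.natAbs) := by
      apply Summable.mul_left
      apply (summable_int_iff_summable_nat_and_neg).2
      constructor <;> · simpa using summable_geometric_of_lt_one hr0 hr1
    apply Summable.of_nonneg_of_le _ _ hsum
    · intro n
      positivity
    · intro n
      set m : ℝ := (n.natAbs : ℝ) with hm
      have hmabs : m = |(n:ℝ)| := by
        rw [hm, Nat.cast_natAbs, Int.cast_abs]
      have hm0 : 0 ≤ m := by rw [hmabs]; exact abs_nonneg _
      have hnorm : ‖a n‖ = Real.exp (-((n:ℝ) * w.im)) / Real.cosh (2 * n * T) := by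
        rw [ha n]
        rw [norm_div, RCLike.norm_conj, Complex.norm_exp,
          Complex.norm_real]
        have hre : (Complex.I * n * w).re = -((n:ℝ) * w.im) := by
          simp [Complex.mul_re, Complex.mul_im]
        rw [hre, Real.norm_eq_abs, abs_of_pos (hcoshpos n)]
      have hch : Real.exp (2 * m * T) / 2 ≤ Real.cosh (2 * n * T) := by
        have h1 : Real.cosh (2 * n * T) = Real.cosh (2 * m * T) := by
          rw [← Real.cosh_abs (2 * n * T)]
          congr 1
          rw [abs_mul, abs_mul, hmabs]
          simp [abs_of_pos hT]
        rw [h1, Real.cosh_eq]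
        have := Real.exp_pos (-(2 * m * T))
        linarith
      have hrpow : r ^ n.natAbs = Real.exp (-(2 * (T - |w.im|)) * m) := by
        rw [hr, ← Real.exp_nat_mul, hm, mul_comm]
      have habs : -((n:ℝ) * w.im) ≤ m * |w.im| := by
        have : -((n:ℝ) * w.im) ≤ |(n:ℝ) * w.im| := neg_le_abs _
        rwa [abs_mul, ← hmabs] at this
      have key : Real.exp (-((n:ℝ) * w.im)) ^ 2 ≤ (2 * r ^ n.natAbs) * Real.cosh (2 * n * T) := by
        calc Real.exp (-((n:ℝ) * w.im)) ^ 2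
            = Real.exp (-((n:ℝ) * w.im) + -((n:ℝ) * w.im)) := by
              rw [sq, ← Real.exp_add]
          _ ≤ Real.exp (-(2 * (T - |w.im|)) * m + 2 * m * T) := by
              apply Real.exp_le_exp.2
              have h2 : (0:ℝ) ≤ |w.im| := abs_nonneg _
              nlinarith
          _ = (2 * r ^ n.natAbs) * (Real.exp (2 * m * T) / 2) := by
              rw [hrpow, Real.exp_add]; ring
          _ ≤ (2 * r ^ n.natAbs) * Real.cosh (2 * n * T) := by
              apply mul_le_mul_of_nonneg_left hch
              positivity
      rw [hnorm]
      rw [div_pow, div_mul_eq_mul_div, div_le_iff₀ (by positivity)]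
      nlinarith [mul_le_mul_of_nonneg_right key (hcoshpos n).le]
  · intro c hc
    apply tsum_congr
    intro n
    rw [ha n]
    rw [map_div₀]
    simp only [Complex.conj_conj, Complex.conj_ofReal]
    rw [mul_assoc, div_mul_cancel₀]
    exact_mod_cast (hcoshpos n).ne'
end
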